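/- Let α = θ_{x_1}^{-1}θ_{x_1} ⋯ θ_{x_n}^{-1}θ_{x_n} and β = θ_{y_1}^{-1}θ_{y_1} ⋯ θ_{y_m}^{-1}θ_{y_m} be nonzero idempotents of this form (x_i, y_j ∈ A, neither in O = {θ_a θ_a^{-1} : a ∈ A}). If for every a ∈ A, θ_a θ_a^{-1} ≤ α iff θ_a θ_a^{-1} ≤ β, then α = β. -/

import Mathlib

def IsWord {A : Type} (T : A → A → Prop) (w : List A) : Prop := w ≠ [] ∧ w.Chain' T

def PMap (A : Type) := List A → Option (List A)

def pzero {A : Type} : PMap A := fun _ => none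

def pcomp {A : Type} (f g : PMap A) : PMap A := fun x => (g x).bind f

open Classical in
noncomputable def pinv {A : Type} (f : PMap A) : PMap A := fun y =>
  if h : ∃ x, f x = some y then some h.choose else none

open Classical in
noncomputable def theta {A : Type} (T : A → A → Prop) (w : List A) : PMap A := fun x =>
  if IsWord T x ∧ IsWord T (w ++ x) then some (w ++ x) else none

open Classical in
noncomputable def pid {A : Type} (T : A → A → Prop) : PMap A := fun x =>
  if IsWord T x then some x else none

noncomputable def idemL {A : Type} (T : A → A → Prop) (a : A) : PMap A :=
  pcomp (pinv (theta T [a])) (theta T [a])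

noncomputable def rgIdem {A : Type} (T : A → A → Prop) (a : A) : PMap A :=
  pcomp (theta T [a]) (pinv (theta T [a]))

noncomputable def prodIdems {A : Type} (T : A → A → Prop) (xs : List A) : PMap A :=
  (xs.map (idemL T)).foldr pcomp (pid T)

def pdom {A : Type} (f : PMap A) : Set (List A) := {x | f x ≠ none}

inductive Hull {A : Type} (T : A → A → Prop) : PMap A → Prop
  | gen {w : List A} : IsWord T w → Hull T (theta T w)
  | zero : Hull T pzero
  | comp {f g : PMap A} : Hull T f → Hull T g → Hull T (pcomp f g)
  | inv {f : PMap A} : Hull T f → Hull T (pinv f)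

open Classical in
noncomputable def smul {A : Type} (T : A → A → Prop) :
    Option (List A) → Option (List A) → Option (List A)
  | some u, some v => if IsWord T (u ++ v) then some (u ++ v) else none
  | _, _ => none

open Classical

lemma theta_eq_some {A : Type} {T : A → A → Prop} {w x z : List A}
    (h : theta T w x = some z) : IsWord T x ∧ IsWord T (w ++ x) ∧ w ++ x = z := by
  unfold theta at h
  split at h
  next hc => exact ⟨hc.1, hc.2, Option.some.inj h⟩
  next => simp at h

lemma idemL_apply {A : Type} (T : A → A → Prop) (a : A) (x : List A) :
    idemL T a x = if IsWord T x ∧ IsWord T (a :: x) then some x else none := by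
  show (theta T [a] x).bind (pinv (theta T [a])) = _
  by_cases hc : IsWord T x ∧ IsWord T ([a] ++ x)
  · have hx : theta T [a] x = some ([a] ++ x) := if_pos hc
    have hc' : IsWord T x ∧ IsWord T (a :: x) := by simpa using hc
    rw [hx, if_pos hc']
    show pinv (theta T [a]) ([a] ++ x) = some x
    unfold pinv
    have hex : ∃ y, theta T [a] y = some ([a] ++ x) := ⟨x, hx⟩
    rw [dif_pos hex]
    have := theta_eq_some hex.choose_spec
    have : hex.choose = x := List.append_cancel_left this.2.2
    rw [this]
  · have hx : theta T [a] x = none := if_neg hc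
    rw [hx, if_neg (fun h => hc (by simpa using h))]
    rfl

lemma prodIdems_apply {A : Type} (T : A → A → Prop) (xs : List A) (x : List A) :
    prodIdems T xs x = if IsWord T x ∧ ∀ a ∈ xs, IsWord T (a :: x) then some x else none := by
  induction xs with
  | nil => simp [prodIdems, pid]
  | cons a xs ih =>
    have hstep : prodIdems T (a :: xs) x = (prodIdems T xs x).bind (idemL T a) := rfl
    rw [hstep, ih]
    by_cases h1 : IsWord T x ∧ ∀ b ∈ xs, IsWord T (b :: x)
    · rw [if_pos h1]
      show idemL T a x = _
      rw [idemL_apply]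
      by_cases h2 : IsWord T (a :: x)
      · rw [if_pos ⟨h1.1, h2⟩, if_pos ⟨h1.1, by simpa [h2] using h1.2⟩]
      · rw [if_neg (fun hh => h2 hh.2),
            if_neg (fun hh => h2 ((hh.2 a List.mem_cons_self)))]
    · rw [if_neg h1,
          if_neg (fun hh => h1 ⟨hh.1, fun b hb => hh.2 b (List.mem_cons_of_mem a hb)⟩)]
      rfl

lemma rgIdem_apply {A : Type} (T : A → A → Prop) (a : A) (x : List A) :
    rgIdem T a x = if ∃ x', IsWord T x' ∧ IsWord T (a :: x') ∧ a :: x' = x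
      then some x else none := by
  show (pinv (theta T [a]) x).bind (theta T [a]) = _
  by_cases hex : ∃ y, theta T [a] y = some x
  · unfold pinv
    rw [dif_pos hex]
    have hs := theta_eq_some hex.choose_spec
    have : (some hex.choose).bind (theta T [a]) = some x := by
      exact hex.choose_spec
    rw [this, if_pos ⟨hex.choose, hs.1, by simpa using hs.2.1, hs.2.2⟩]
  · unfold pinv
    rw [dif_neg hex, if_neg]
    · rfl
    · rintro ⟨x', h1, h2, h3⟩
      exact hex ⟨x', by unfold theta; rw [if_pos ⟨h1, by simpa using h2⟩]; simpa using h3⟩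

lemma key {A : Type} (T : A → A → Prop) (hT : ∀ a : A, ∃ b : A, T a b) (xs : List A) (a : A) :
    pcomp (prodIdems T xs) (rgIdem T a) = rgIdem T a ↔ ∀ c ∈ xs, T c a := by
  constructor
  · intro heq c hc
    obtain ⟨b, hb⟩ := hT a
    have hw : IsWord T [b] := ⟨by simp, List.isChain_singleton b⟩
    have hw2 : IsWord T (a :: [b]) := ⟨by simp, List.isChain_pair.mpr hb⟩
    have hr : rgIdem T a [a, b] = some [a, b] := by
      rw [rgIdem_apply, if_pos ⟨[b], hw, hw2, rfl⟩]
    have this : prodIdems T xs [a, b] = some [a, b] := by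
      simpa [pcomp, hr, Option.bind] using congrFun heq [a, b]
    rw [prodIdems_apply] at this
    by_contra hne
    rw [if_neg] at this
    · cases this
    · rintro ⟨-, hall⟩
      exact hne ((hall c hc).2.rel_head)
  · intro hall
    funext x
    show (rgIdem T a x).bind (prodIdems T xs) = rgIdem T a x
    rw [rgIdem_apply]
    by_cases hex : ∃ x', IsWord T x' ∧ IsWord T (a :: x') ∧ a :: x' = x
    · rw [if_pos hex]
      obtain ⟨x', h1, h2, h3⟩ := hex
      show prodIdems T xs x = some x
      rw [prodIdems_apply, if_pos]
      refine ⟨h3 ▸ h2, fun c hc => ⟨by simp, ?_⟩⟩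
      rw [← h3]
      exact List.isChain_cons_cons.mpr ⟨hall c hc, h2.2⟩
    · rw [if_neg hex]; rfl

/-- Elements of `O↑ − O` are determined by the elements of `O` below them. -/
theorem stmt9 {A : Type} [Fintype A] (T : A → A → Prop) (hT : ∀ a : A, ∃ b : A, T a b)
    (xs ys : List A) (hxs : xs ≠ []) (hys : ys ≠ [])
    (hx : prodIdems T xs ≠ pzero) (hy : prodIdems T ys ≠ pzero)
    (h : ∀ a : A,
      (pcomp (prodIdems T xs) (rgIdem T a) = rgIdem T a ↔
       pcomp (prodIdems T ys) (rgIdem T a) = rgIdem T a)) :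
    prodIdems T xs = prodIdems T ys := by
  have h' : ∀ a : A, (∀ c ∈ xs, T c a) ↔ (∀ c ∈ ys, T c a) := by
    intro a; rw [← key T hT xs a, ← key T hT ys a]; exact h a
  funext x
  rw [prodIdems_apply, prodIdems_apply]
  by_cases hw : IsWord T x
  · obtain ⟨hne, hch⟩ := hw
    obtain ⟨b, t, rfl⟩ := List.exists_cons_of_ne_nil hne
    have hcx : ∀ z : List A, (∀ c ∈ z, IsWord T (c :: b :: t)) ↔ ∀ c ∈ z, T c b := by
      intro z
      refine forall₂_congr fun c hc => ?_
      exact ⟨fun hcw => (List.isChain_cons_cons.mp hcw.2).1,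
             fun hcb => ⟨by simp, List.isChain_cons_cons.mpr ⟨hcb, hch⟩⟩⟩
    by_cases hc : ∀ c ∈ xs, IsWord T (c :: b :: t)
    · have hc2 : ∀ c ∈ ys, IsWord T (c :: b :: t) :=
        (hcx ys).mpr ((h' b).mp ((hcx xs).mp hc))
      rw [if_pos ⟨⟨hne, hch⟩, hc⟩, if_pos ⟨⟨hne, hch⟩, hc2⟩]
    · have hc2 : ¬∀ c ∈ ys, IsWord T (c :: b :: t) :=
        fun k => hc ((hcx xs).mpr ((h' b).mpr ((hcx ys).mp k)))
      rw [if_neg (fun k => hc k.2), if_neg (fun k => hc2 k.2)]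
  · rw [if_neg (fun hh => hw hh.1), if_neg (fun hh => hw hh.1)]
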